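/- Let σ > 0 and α, r ∈ ℝ with Δ := (σ²/2 − α)² + 2σ²r > 0, and let d₁ < d₂ be the roots of P(d) := (σ²/2)d² + (α − σ²/2)d − r. Let x, b > 0 and β ∈ ℝ with β > d₁. Let Φ be the standard normal CDF and define H(t) := Φ( (1/(σ√t))·log(b/x) + σ((d₁+d₂)/2 − β)·√t ) for t > 0. Then lim_{t→∞} x^β e^{P(β)t} H(t) = 0. -/

import Mathlib

open MeasureTheory Set Filter

/-- The standard normal cumulative distribution function. -/
noncomputable def stdNormalCDF (y : ℝ) : ℝ :=
  ((ProbabilityTheory.gaussianReal 0 1) (Set.Iic y)).toReal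

lemma stdNormalCDF_nonneg (y : ℝ) : 0 ≤ stdNormalCDF y := ENNReal.toReal_nonneg

lemma stdNormalCDF_le_one (y : ℝ) : stdNormalCDF y ≤ 1 := by
  have h : (ProbabilityTheory.gaussianReal 0 1) (Set.Iic y) ≤ 1 := prob_le_one
  simpa [stdNormalCDF] using ENNReal.toReal_mono ENNReal.one_ne_top h

lemma stdNormalCDF_eq (y : ℝ) :
    stdNormalCDF y = ∫ u in Iic y, ProbabilityTheory.gaussianPDFReal 0 1 u := by
  rw [stdNormalCDF, ProbabilityTheory.gaussianReal_apply_eq_integral _ one_ne_zero,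
    ENNReal.toReal_ofReal]
  exact integral_nonneg fun u => ProbabilityTheory.gaussianPDFReal_nonneg _ _ u

lemma stdNormalCDF_le_exp (ε : ℝ) (hε : 0 < ε) (hε1 : ε ≤ 1) (y : ℝ) (hy : y ≤ 0) :
    stdNormalCDF y ≤ (Real.sqrt ε)⁻¹ * Real.exp (-((1 - ε) * y ^ 2) / 2) := by
  have h2π : (0:ℝ) < 2 * Real.pi := by positivity
  set C : ℝ := (Real.sqrt (2 * Real.pi))⁻¹ * Real.exp (-((1 - ε) * y ^ 2) / 2) with hC
  have hC0 : 0 ≤ C := by positivity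
  have hpdf : ∀ u ∈ Iic y, ProbabilityTheory.gaussianPDFReal 0 1 u
      ≤ C * Real.exp (-(ε/2) * u ^ 2) := by
    intro u hu
    simp only [Set.mem_Iic] at hu
    have hu2 : y ^ 2 ≤ u ^ 2 := by nlinarith
    rw [ProbabilityTheory.gaussianPDFReal, hC]
    simp only [NNReal.coe_one, mul_one, sub_zero]
    rw [mul_assoc, ← Real.exp_add]
    refine mul_le_mul_of_nonneg_left (Real.exp_le_exp.mpr ?_) (by positivity)
    nlinarith [mul_nonneg (sub_nonneg.mpr hε1) (sub_nonneg.mpr hu2)]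
  have hg : Integrable (fun u : ℝ => C * Real.exp (-(ε/2) * u ^ 2)) := by
    exact (integrable_exp_neg_mul_sq (by positivity)).const_mul C
  have h1 : stdNormalCDF y ≤ ∫ u in Iic y, C * Real.exp (-(ε/2) * u ^ 2) := by
    rw [stdNormalCDF_eq]
    exact setIntegral_mono_on
      ((ProbabilityTheory.integrable_gaussianPDFReal 0 1).integrableOn)
      hg.integrableOn measurableSet_Iic hpdf
  have h2 : ∫ u in Iic y, C * Real.exp (-(ε/2) * u ^ 2)
      ≤ ∫ u : ℝ, C * Real.exp (-(ε/2) * u ^ 2) :=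
    setIntegral_le_integral hg (Eventually.of_forall fun u => by positivity)
  have h3 : ∫ u : ℝ, C * Real.exp (-(ε/2) * u ^ 2)
      = C * Real.sqrt (Real.pi / (ε/2)) := by
    rw [MeasureTheory.integral_const_mul, integral_gaussian]
  have h4 : (Real.sqrt (2 * Real.pi))⁻¹ * Real.sqrt (Real.pi / (ε/2)) = (Real.sqrt ε)⁻¹ := by
    have : Real.pi / (ε/2) = (2 * Real.pi) / ε := by field_simp
    rw [this, Real.sqrt_div h2π.le]
    have h2πs : Real.sqrt (2 * Real.pi) ≠ 0 := by positivity
    field_simp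
  calc stdNormalCDF y ≤ C * Real.sqrt (Real.pi / (ε/2)) := by
        rw [← h3]; exact h1.trans h2
    _ = (Real.sqrt ε)⁻¹ * Real.exp (-((1 - ε) * y ^ 2) / 2) := by
        rw [hC]
        rw [mul_comm (Real.sqrt (2 * Real.pi))⁻¹, mul_assoc, ← h4]
        ring

set_option maxHeartbeats 1600000 in
/-- If `β > d₁`, then `x^β e^{P(β)t} H(t;b) → 0` as `t → ∞`, where
`H(t;b) = Φ((1/(σ√t)) log(b/x) + σ((d₁+d₂)/2 − β)√t)`. -/
theorem stmt_12 (σ α r : ℝ) (hσ : 0 < σ)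
    (hΔ : 0 < (σ ^ 2 / 2 - α) ^ 2 + 2 * σ ^ 2 * r)
    (d₁ d₂ : ℝ)
    (hd₁ : d₁ = ((σ ^ 2 / 2 - α) - Real.sqrt ((σ ^ 2 / 2 - α) ^ 2 + 2 * σ ^ 2 * r)) / σ ^ 2)
    (hd₂ : d₂ = ((σ ^ 2 / 2 - α) + Real.sqrt ((σ ^ 2 / 2 - α) ^ 2 + 2 * σ ^ 2 * r)) / σ ^ 2)
    (x b β : ℝ) (hx : 0 < x) (hb : 0 < b) (hβ : d₁ < β) :
    Tendsto
      (fun t : ℝ =>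
        x ^ β * Real.exp ((σ ^ 2 / 2 * β ^ 2 + (α - σ ^ 2 / 2) * β - r) * t) *
          stdNormalCDF
            ((1 / (σ * Real.sqrt t)) * Real.log (b / x) +
              σ * ((d₁ + d₂) / 2 - β) * Real.sqrt t))
      atTop (nhds 0) := by
  have hσ2 : (0:ℝ) < σ ^ 2 := by positivity
  set s := Real.sqrt ((σ ^ 2 / 2 - α) ^ 2 + 2 * σ ^ 2 * r) with hsdef
  have hs2 : s ^ 2 = (σ ^ 2 / 2 - α) ^ 2 + 2 * σ ^ 2 * r := Real.sq_sqrt hΔ.le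
  have hspos : 0 < s := Real.sqrt_pos.mpr hΔ
  set m := (d₁ + d₂) / 2 with hmdef
  set P := σ ^ 2 / 2 * β ^ 2 + (α - σ ^ 2 / 2) * β - r with hPdef
  have hm : m = (σ ^ 2 / 2 - α) / σ ^ 2 := by
    rw [hmdef, hd₁, hd₂]; field_simp; ring
  have hd₁m : d₁ = m - s / σ ^ 2 := by rw [hd₁, hm]; field_simp
  have key : P = σ ^ 2 / 2 * ((β - m) ^ 2 - (s / σ ^ 2) ^ 2) := by
    rw [hPdef, hm]
    field_simp
    linear_combination 4 * hs2
  have hxb : (0:ℝ) < x ^ β := Real.rpow_pos_of_pos hx β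
  clear_value s m P
  have hf0 : ∀ t : ℝ, 0 ≤ x ^ β * Real.exp (P * t) *
      stdNormalCDF ((1 / (σ * Real.sqrt t)) * Real.log (b / x) + σ * (m - β) * Real.sqrt t) := by
    intro t
    exact mul_nonneg (mul_nonneg hxb.le (Real.exp_pos _).le) (stdNormalCDF_nonneg _)
  rcases le_or_gt β m with hcase | hcase
  · -- case β ≤ m : P < 0, CDF ≤ 1
    have hPneg : P < 0 := by
      have h1 : β - d₁ > 0 := by linarith
      have h2 : m - β ≥ 0 := by linarith
      have h3 : s / σ ^ 2 > 0 := by positivity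
      have h4 : m - β < s / σ ^ 2 := by
        rw [hd₁m] at hβ; linarith
      have h5 : (β - m) ^ 2 < (s / σ ^ 2) ^ 2 := by
        nlinarith [mul_pos (show (0:ℝ) < s / σ ^ 2 - (m - β) by linarith)
          (show (0:ℝ) < s / σ ^ 2 + (m - β) by linarith)]
      rw [key]
      exact mul_neg_of_pos_of_neg (by positivity) (by linarith)
    have hexp : Tendsto (fun t : ℝ => Real.exp (P * t)) atTop (nhds 0) :=
      Real.tendsto_exp_atBot.comp ((tendsto_const_mul_atBot_of_neg hPneg).mpr tendsto_id)
    refine squeeze_zero' (Eventually.of_forall hf0) (Eventually.of_forall fun t => ?_)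
      (by simpa using tendsto_const_nhds.mul hexp : Tendsto (fun t : ℝ => x ^ β * Real.exp (P * t)) atTop (nhds 0))
    calc x ^ β * Real.exp (P * t) * stdNormalCDF _
        ≤ x ^ β * Real.exp (P * t) * 1 := by
          exact mul_le_mul_of_nonneg_left (stdNormalCDF_le_one _)
            (mul_nonneg hxb.le (Real.exp_pos _).le)
      _ = x ^ β * Real.exp (P * t) := mul_one _
  · -- case β > m
    set c : ℝ := σ * (β - m) with hcdef
    have hc : 0 < c := by rw [hcdef]; exact mul_pos hσ (by linarith)
    set a : ℝ := Real.log (b / x) / σ with hadef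
    set ε : ℝ := min (1/2) (s ^ 2 / (2 * σ ^ 2 * c ^ 2)) with hεdef
    clear_value c a
    have hε : 0 < ε := lt_min (by norm_num)
      (div_pos (pow_pos hspos 2) (mul_pos (by positivity) (pow_pos hc 2)))
    have hε1 : ε ≤ 1 := le_trans (min_le_left _ _) (by norm_num)
    have hεc : ε * c ^ 2 ≤ s ^ 2 / (2 * σ ^ 2) := by
      have h := min_le_right (1/2 : ℝ) (s ^ 2 / (2 * σ ^ 2 * c ^ 2))
      rw [← hεdef] at h
      calc ε * c ^ 2 ≤ s ^ 2 / (2 * σ ^ 2 * c ^ 2) * c ^ 2 :=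
            mul_le_mul_of_nonneg_right h (sq_nonneg c)
        _ = s ^ 2 / (2 * σ ^ 2) := by
            field_simp
    set K : ℝ := P - (1 - ε) * c ^ 2 / 2 with hKdef
    clear_value ε K
    have hPc : 2 * σ ^ 2 * P = σ ^ 2 * c ^ 2 - s ^ 2 := by
      rw [key, hcdef]
      field_simp
    have hKneg : K < 0 := by
      have h2 : 2 * σ ^ 2 * K = ε * (σ ^ 2 * c ^ 2) - s ^ 2 := by
        rw [hKdef]; linear_combination hPc
      have h3 : ε * (σ ^ 2 * c ^ 2) ≤ s ^ 2 / 2 := by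
        have := mul_le_mul_of_nonneg_left hεc hσ2.le
        calc ε * (σ ^ 2 * c ^ 2) = σ ^ 2 * (ε * c ^ 2) := by ring
          _ ≤ σ ^ 2 * (s ^ 2 / (2 * σ ^ 2)) := this
          _ = s ^ 2 / 2 := by field_simp
      have h4 : 2 * σ ^ 2 * K < 0 := by linarith [pow_pos hspos 2]
      nlinarith [h4]
    set D : ℝ := x ^ β * (Real.sqrt ε)⁻¹ * Real.exp ((1 - ε) * a * c) with hDdef
    clear_value D
    have hg : Tendsto (fun t : ℝ => D * Real.exp (K * t)) atTop (nhds 0) := by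
      have hexp : Tendsto (fun t : ℝ => Real.exp (K * t)) atTop (nhds 0) :=
        Real.tendsto_exp_atBot.comp ((tendsto_const_mul_atBot_of_neg hKneg).mpr tendsto_id)
      simpa using tendsto_const_nhds.mul hexp
    refine squeeze_zero' (Eventually.of_forall hf0) ?_ hg
    filter_upwards [eventually_ge_atTop (max 1 ((|a| + 1) / c))] with t ht
    have ht1 : (1:ℝ) ≤ t := le_trans (le_max_left _ _) ht
    have ht0 : 0 < t := by linarith
    have hts : 0 < Real.sqrt t := Real.sqrt_pos.mpr ht0
    have htsq : Real.sqrt t ^ 2 = t := Real.sq_sqrt ht0.le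
    have hct : |a| + 1 ≤ c * t := by
      have h := le_trans (le_max_right 1 ((|a| + 1) / c)) ht
      rw [div_le_iff₀ hc] at h
      linarith
    set y : ℝ := (1 / (σ * Real.sqrt t)) * Real.log (b / x) + σ * (m - β) * Real.sqrt t with hydef
    have hyval : y = a / Real.sqrt t - c * Real.sqrt t := by
      rw [hydef, hadef, hcdef]
      field_simp
      ring
    clear_value y
    have hy0 : y ≤ 0 := by
      rw [hyval, sub_nonpos, div_le_iff₀ hts]
      have : c * Real.sqrt t * Real.sqrt t = c * t := by rw [mul_assoc, ← sq, htsq]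
      rw [this]
      calc a ≤ |a| := le_abs_self a
        _ ≤ c * t := by linarith
    have hy2 : c ^ 2 * t - 2 * a * c ≤ y ^ 2 := by
      rw [hyval]
      have h1 : (a / Real.sqrt t) * (c * Real.sqrt t) = a * c := by
        field_simp
      have e : (a / Real.sqrt t - c * Real.sqrt t) ^ 2
          = (a / Real.sqrt t) ^ 2 - 2 * (a * c) + c ^ 2 * t := by
        linear_combination (-2 : ℝ) * h1 + c ^ 2 * htsq
      rw [e]
      linarith [sq_nonneg (a / Real.sqrt t)]
    have hΦ := stdNormalCDF_le_exp ε hε hε1 y hy0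
    calc x ^ β * Real.exp (P * t) * stdNormalCDF y
        ≤ x ^ β * Real.exp (P * t) * ((Real.sqrt ε)⁻¹ * Real.exp (-((1 - ε) * y ^ 2) / 2)) :=
          mul_le_mul_of_nonneg_left hΦ (mul_nonneg hxb.le (Real.exp_pos _).le)
      _ = x ^ β * (Real.sqrt ε)⁻¹ * (Real.exp (P * t) * Real.exp (-((1 - ε) * y ^ 2) / 2)) := by
          ring
      _ ≤ D * Real.exp (K * t) := by
          rw [hDdef, mul_assoc (x ^ β * (Real.sqrt ε)⁻¹), ← Real.exp_add, ← Real.exp_add]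
          refine mul_le_mul_of_nonneg_left (Real.exp_le_exp.mpr ?_) (by positivity)
          rw [hKdef]
          have h1ε : 0 ≤ 1 - ε := by linarith
          linarith [mul_nonneg h1ε (sub_nonneg.mpr hy2)]
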